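/- arXiv:2207.01852 — 3 statements merged into one kernel-verified Lean document; each statement's English description precedes it below -/
import Mathlib

section
/- Let x_1,…,x_m be real numbers, X = diag(x_1,…,x_m) ∈ ℝ^{m×m}, and e = (1,…,1)^T ∈ ℝ^m. For each ℓ ≥ 0 let V_{(ℓ)} ∈ ℝ^{m×(n+1)} be the ℓ-th order derivative Vandermonde matrix, whose (j,k) entry (rows j = 1,…,m, columns k = 0,…,n) is the ℓ-th derivative of x^k evaluated at x_j, i.e. k(k−1)⋯(k−ℓ+1)·x_j^{k−ℓ} when ℓ ≤ k and 0 when ℓ > k (with V_{(0)} = V the ordinary Vandermonde matrix). Let A ∈ ℝ^{(ℓ+1)m×(ℓ+1)m} be the block lower-bidiagonal matrix with (ℓ+1)×(ℓ+1) blocks of size m×m, having X in every diagonal block, the block i·I (i times the m×m identity) in the subdiagonal block position (i+1, i) for i = 1,…,ℓ, and zero blocks elsewhere. Then for every k with 0 ≤ k ≤ n, the (k+1)-th column of the stacked matrix [V; V_{(1)}; V_{(2)}; …; V_{(ℓ)}] ∈ ℝ^{(ℓ+1)m×(n+1)} equals A^k applied to the vector (e; 0; …; 0) ∈ ℝ^{(ℓ+1)m}.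 -/
open Matrix

/-- The `ℓ`-th order derivative Vandermonde matrix: entry `(j,k)` is the `ℓ`-th
derivative of `x ^ k` evaluated at `x j`, i.e. `k(k-1)⋯(k-ℓ+1) * x j ^ (k-ℓ)`
when `ℓ ≤ k`, and `0` when `ℓ > k`. -/
def vandDeriv (m n ℓ : ℕ) (x : Fin m → ℝ) : Matrix (Fin m) (Fin (n + 1)) ℝ :=
  Matrix.of fun j k =>
    if ℓ ≤ (k : ℕ) then ((k : ℕ).descFactorial ℓ : ℝ) * x j ^ ((k : ℕ) - ℓ) else 0

/-- The block lower-bidiagonal matrix with `(ℓ+1) × (ℓ+1)` blocks of size `m × m`,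
with `X = diag (x 1, …, x m)` in every diagonal block and `i • I` in subdiagonal
block position `(i+1, i)` for `i = 1, …, ℓ`, and zero blocks elsewhere. -/
def blockA (m ℓ : ℕ) (x : Fin m → ℝ) :
    Matrix (Fin (ℓ + 1) × Fin m) (Fin (ℓ + 1) × Fin m) ℝ :=
  Matrix.of fun p q =>
    if p.1 = q.1 ∧ p.2 = q.2 then x p.2
    else if (p.1 : ℕ) = (q.1 : ℕ) + 1 ∧ p.2 = q.2 then ((p.1 : ℕ) : ℝ)
    else 0

/-- The stacked matrix `[V; V_(1); V_(2); …; V_(ℓ)]`, whose block row `i` is the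
`i`-th derivative Vandermonde matrix. -/
def stackedVand (m n ℓ : ℕ) (x : Fin m → ℝ) :
    Matrix (Fin (ℓ + 1) × Fin m) (Fin (n + 1)) ℝ :=
  Matrix.of fun p k => vandDeriv m n (p.1 : ℕ) x p.2 k

/-- The vector `(e; 0; …; 0)` with `e` the all-ones vector of length `m`. -/
def eZeroVec (m ℓ : ℕ) : Fin (ℓ + 1) × Fin m → ℝ := fun p => if p.1 = 0 then 1 else 0

noncomputable def G (x : ℝ) (K i : ℕ) : ℝ :=
  if i ≤ K then (K.descFactorial i : ℝ) * x ^ (K - i) else 0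

lemma G_rec (x : ℝ) (K i : ℕ) :
    x * G x K i + (i : ℝ) * G x K (i - 1) = G x (K + 1) i := by
  rcases i with _ | s
  · simp [G]; ring
  · simp only [G, Nat.succ_sub_one]
    rcases le_or_gt (s+1) K with h | h
    · have hs : s ≤ K := by omega
      rw [if_pos h, if_pos hs, if_pos (by omega : s + 1 ≤ K + 1)]
      rw [Nat.succ_descFactorial_succ, Nat.descFactorial_succ]
      have h1 : K - s = (K - (s+1)) + 1 := by omega
      have h2 : K + 1 - (s + 1) = K - s := by omega
      rw [h2, h1]
      push_cast [Nat.cast_sub h, Nat.cast_sub hs]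
      ring
    · rcases eq_or_lt_of_le (by omega : K + 1 ≤ s + 1) with h2 | h2
      · obtain rfl : K = s := by omega
        rw [if_neg (by omega), if_pos le_rfl, if_pos le_rfl]
        simp only [Nat.sub_self, pow_zero, Nat.succ_descFactorial_succ]
        push_cast; ring
      · rw [if_neg (by omega), if_neg (by omega), if_neg (by omega)]
        ring

lemma blockA_mulVec (m ℓ : ℕ) (x : Fin m → ℝ) (w : Fin (ℓ+1) × Fin m → ℝ)
    (p : Fin (ℓ + 1) × Fin m) :
    (blockA m ℓ x *ᵥ w) p
      = x p.2 * w (p.1, p.2)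
        + ∑ i : Fin (ℓ+1), if (p.1:ℕ) = (i:ℕ) + 1 then ((p.1:ℕ):ℝ) * w (i, p.2) else 0 := by
  simp only [mulVec, dotProduct, blockA, Matrix.of_apply, Fintype.sum_prod_type]
  have h1 : ∀ i j, (if p.1 = i ∧ p.2 = j then x p.2
        else if (p.1:ℕ) = (i:ℕ) + 1 ∧ p.2 = j then ((p.1:ℕ):ℝ) else 0) * w (i, j)
      = if j = p.2 then
          ((if p.1 = i then x p.2 * w (i, p.2) else 0)
            + (if (p.1:ℕ) = (i:ℕ) + 1 then ((p.1:ℕ):ℝ) * w (i, p.2) else 0))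
        else 0 := by
    intro i j
    by_cases hj : j = p.2
    · subst hj
      by_cases hi : p.1 = i
      · have : ¬ ((p.1:ℕ) = (i:ℕ) + 1) := by subst hi; omega
        simp [hi, this]
      · simp [hi]
    · have hj' : ¬ (p.2 = j) := fun h => hj h.symm
      simp [hj, hj']
  simp only [h1, Finset.sum_ite_eq', Finset.mem_univ, if_true, Finset.sum_add_distrib]
  rw [Finset.sum_ite_eq Finset.univ p.1]
  simp

lemma key (m ℓ : ℕ) (x : Fin m → ℝ) (K : ℕ) :
    (blockA m ℓ x ^ K) *ᵥ eZeroVec m ℓ = fun p => G (x p.2) K (p.1:ℕ) := by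
  induction K with
  | zero =>
      funext p
      have h0 : ((p.1:ℕ) ≤ 0) ↔ p.1 = 0 := by
        rw [Fin.ext_iff]; simp
      simp only [pow_zero, one_mulVec, eZeroVec, G, h0]
      split_ifs with h
      · simp [h]
      · rfl
  | succ K ih =>
      rw [pow_succ', ← mulVec_mulVec, ih]
      funext p
      rw [blockA_mulVec, ← G_rec]
      congr 1
      rcases hp : (p.1:ℕ) with _ | s
      · simp [hp]
      · have hs : s < ℓ + 1 := by have := p.1.isLt; omega
        have heq : ∀ i : Fin (ℓ+1), (s + 1 = (i:ℕ) + 1) ↔ i = ⟨s, hs⟩ := by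
          intro i; simp only [Fin.ext_iff, Fin.val_mk]; omega
        simp only [heq]
        rw [Finset.sum_ite_eq' Finset.univ (⟨s, hs⟩ : Fin (ℓ+1))]
        simp [hp]

/-- The `(k+1)`-th column of the stacked matrix `[V; V_(1); …; V_(ℓ)]` equals
`A ^ k` applied to the vector `(e; 0; …; 0)`. -/
theorem stacked_vandermonde_col_eq_pow_mulVec (m n ℓ : ℕ) (x : Fin m → ℝ)
    (k : Fin (n + 1)) :
    (fun p => stackedVand m n ℓ x p k) =
      (blockA m ℓ x ^ (k : ℕ)) *ᵥ eZeroVec m ℓ := by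
  rw [key]
  funext p
  simp [stackedVand, vandDeriv, G]
end

section
/- Let n ≥ 1, let H = (h_{j,k}) ∈ ℝ^{(n+1)×n} be an upper Hessenberg matrix (h_{j,k} = 0 for j > k+1, indices j = 0,…,n, k = 0,…,n−1) with h_{k+1,k} ≠ 0 for all k, and define polynomials p_0 = 1 and h_{k+1,k}·p_{k+1}(X) = X·p_k(X) − Σ_{j=0}^{k} h_{j,k}·p_j(X). Let s_1,…,s_M be real numbers, S = diag(s_1,…,s_M), and let W ∈ ℝ^{M×(n+1)} be the matrix with entries W_{j,k} = p_k(s_j). Then the first column of W is the all-ones vector and S·W_− = W·H, where W_− ∈ ℝ^{M×n} is W with its last column deleted. Moreover, W is the unique matrix with all-ones first column satisfying S·W_− = W·H. -/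
open Matrix Polynomial

/-- Let `H ∈ ℝ^{(n+1) × n}` be upper Hessenberg with nonzero subdiagonal
entries, `p_0 = 1, …, p_n` the associated Arnoldi polynomials, `S = diag s`,
and `W` the matrix with entries `W j k = p_k (s j)`. Then the first column of
`W` is the all-ones vector, `S * W₋ = W * H` (where `W₋` is `W` with its last
column deleted), and `W` is the unique matrix with all-ones first column
satisfying this relation. -/
theorem arnoldi_eval_matrix (n : ℕ) (hn : 1 ≤ n) (h : ℕ → ℕ → ℝ)
    (hHess : ∀ j k, k < n → j > k + 1 → h j k = 0)
    (hsub : ∀ k < n, h (k + 1) k ≠ 0)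
    (p : ℕ → Polynomial ℝ) (hp0 : p 0 = 1)
    (hrec : ∀ k < n,
      h (k + 1) k • p (k + 1) =
        Polynomial.X * p k - ∑ j ∈ Finset.range (k + 1), h j k • p j)
    (M : ℕ) (s : Fin M → ℝ)
    (H : Matrix (Fin (n + 1)) (Fin n) ℝ)
    (hH : ∀ j k, H j k = h (j : ℕ) (k : ℕ))
    (W : Matrix (Fin M) (Fin (n + 1)) ℝ)
    (hW : ∀ j k, W j k = (p (k : ℕ)).eval (s j)) :
    (∀ j, W j 0 = 1) ∧
    Matrix.diagonal s * W.submatrix id Fin.castSucc = W * H ∧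
    ∀ W' : Matrix (Fin M) (Fin (n + 1)) ℝ,
      (∀ j, W' j 0 = 1) →
      Matrix.diagonal s * W'.submatrix id Fin.castSucc = W' * H →
      W' = W := by
  have hW0 : ∀ j, W j 0 = 1 := by
    intro j; rw [hW]; simp [hp0]
  -- generic sum identity over a row vector
  have sumH : ∀ (v : Fin (n + 1) → ℝ) (k : ℕ) (hk : k < n),
      ∑ i : Fin (n + 1), v i * H i ⟨k, hk⟩ =
        (∑ i : Fin (k + 1), h i k * v ⟨i, by omega⟩) +
          h (k + 1) k * v ⟨k + 1, by omega⟩ := by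
    intro v k hk
    have step1 : ∑ i : Fin (n + 1), v i * H i ⟨k, hk⟩ =
        ∑ i ∈ Finset.range (n + 1),
          (if hi : i < n + 1 then v ⟨i, hi⟩ * h i k else 0) := by
      rw [← Fin.sum_univ_eq_sum_range
        (fun i => if hi : i < n + 1 then v ⟨i, hi⟩ * h i k else 0) (n + 1)]
      refine Finset.sum_congr rfl fun i _ => ?_
      rw [dif_pos i.isLt, hH]
    rw [step1, ← Finset.sum_subset (Finset.range_subset_range.mpr (by omega : k + 2 ≤ n + 1))]
    · rw [Finset.sum_range_succ, dif_pos (by omega : k + 1 < n + 1),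
        ← Fin.sum_univ_eq_sum_range
          (fun i => if hi : i < n + 1 then v ⟨i, hi⟩ * h i k else 0) (k + 1)]
      congr 1
      · refine Finset.sum_congr rfl fun i _ => ?_
        have hi' : (i : ℕ) < n + 1 := by omega
        rw [dif_pos hi', mul_comm]
      · exact mul_comm _ _
    · intro i hi hni
      have h1 : i < n + 1 := Finset.mem_range.mp hi
      have h2 : ¬ i < k + 2 := fun hc => hni (Finset.mem_range.mpr hc)
      rw [dif_pos h1, hHess i k hk (by omega), mul_zero]
  -- evaluated recursion
  have peval : ∀ (k : ℕ) (hk : k < n) (x : ℝ),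
      x * (p k).eval x =
        (∑ i ∈ Finset.range (k + 1), h i k * (p i).eval x) +
          h (k + 1) k * (p (k + 1)).eval x := by
    intro k hk x
    have hh := congrArg (Polynomial.eval x) (hrec k hk)
    simp only [Polynomial.eval_smul, Polynomial.eval_sub, Polynomial.eval_mul,
      Polynomial.eval_X, Polynomial.eval_finset_sum, smul_eq_mul] at hh
    linarith
  -- key recursion for any matrix satisfying the relation
  have keyrec : ∀ (V : Matrix (Fin M) (Fin (n + 1)) ℝ),
      Matrix.diagonal s * V.submatrix id Fin.castSucc = V * H →
      ∀ (k : ℕ) (hk : k < n) (j : Fin M),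
        h (k + 1) k * V j ⟨k + 1, by omega⟩ =
          s j * V j ⟨k, by omega⟩ -
            ∑ i : Fin (k + 1), h i k * V j ⟨i, by omega⟩ := by
    intro V hV k hk j
    have := congrFun (congrFun hV j) ⟨k, hk⟩
    rw [Matrix.diagonal_mul, Matrix.mul_apply, Matrix.submatrix_apply,
      sumH (V j) k hk] at this
    have hcast : (Fin.castSucc ⟨k, hk⟩ : Fin (n + 1)) = ⟨k, by omega⟩ := rfl
    rw [hcast] at this
    simp only [id_eq] at this
    linarith
  have hrel : Matrix.diagonal s * W.submatrix id Fin.castSucc = W * H := by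
    ext j k
    obtain ⟨k, hk⟩ := k
    rw [Matrix.diagonal_mul, Matrix.mul_apply, Matrix.submatrix_apply,
      sumH (W j) k hk]
    have hcast : (Fin.castSucc ⟨k, hk⟩ : Fin (n + 1)) = ⟨k, by omega⟩ := rfl
    rw [hcast]
    simp only [hW, id]
    rw [Fin.sum_univ_eq_sum_range (fun i => h i k * (p i).eval (s j)) (k + 1)]
    exact peval k hk (s j)
  refine ⟨hW0, hrel, ?_⟩
  intro W' hW'0 hrel'
  have key : ∀ m (hm : m < n + 1) (j : Fin M), W' j ⟨m, hm⟩ = W j ⟨m, hm⟩ := by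
    intro m
    induction m using Nat.strong_induction_on with
    | _ m ih =>
      intro hm j
      match m with
      | 0 =>
        have : (⟨0, hm⟩ : Fin (n + 1)) = 0 := rfl
        rw [this, hW'0, hW0]
      | (k + 1) =>
        have hk : k < n := by omega
        have e1 := keyrec W' hrel' k hk j
        have e2 := keyrec W hrel k hk j
        have hsums : ∑ i : Fin (k + 1), h i k * W' j ⟨i, by omega⟩ =
            ∑ i : Fin (k + 1), h i k * W j ⟨i, by omega⟩ := by
          refine Finset.sum_congr rfl fun i _ => ?_
          rw [ih i (by omega) (by omega) j]
        have hk' : W' j ⟨k, by omega⟩ = W j ⟨k, by omega⟩ := ih k (by omega) (by omega) j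
        apply mul_left_cancel₀ (hsub k hk)
        rw [e1, e2, hsums, hk']
  ext j m
  obtain ⟨m, hm⟩ := m
  exact key m hm j
end

section
/- Let n ≥ 1, let H = (h_{j,k}) ∈ ℝ^{(n+1)×n} be an upper Hessenberg matrix with h_{k+1,k} ≠ 0 for all k, and let p_0 = 1, h_{k+1,k}·p_{k+1}(X) = X·p_k(X) − Σ_{j=0}^{k} h_{j,k}·p_j(X) be the associated Arnoldi polynomials. Let s_1,…,s_M be real numbers, S = diag(s_1,…,s_M), and let W ∈ ℝ^{2M×(n+1)} be the block matrix whose upper block has entries p_k(s_j) and whose lower block has entries p'_k(s_j) (formal derivatives evaluated at s_j). Then the first column of W is (e; 0) with e the all-ones vector in ℝ^M, and [[S, O],[I, S]]·W_− = W·H, where W_− is W with its last column deleted, I is the M×M identity, and O the M×M zero matrix. Moreover, W is the unique matrix with first column (e; 0) satisfying this relation. -/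
open Matrix Polynomial

/-- Let `H ∈ ℝ^{(n+1) × n}` be upper Hessenberg with nonzero subdiagonal
entries, `p_0 = 1, …, p_n` the associated Arnoldi polynomials, `S = diag s`,
and `W ∈ ℝ^{2M × (n+1)}` the block matrix whose upper block has entries
`p_k (s j)` and whose lower block has entries `p'_k (s j)`. Then the first
column of `W` is `(e; 0)` with `e` the all-ones vector,
`[[S, O], [I, S]] * W₋ = W * H` (`W₋` is `W` with its last column deleted), and
`W` is the unique matrix with first column `(e; 0)` satisfying this relation. -/
theorem arnoldi_hermite_eval_matrix (n : ℕ) (hn : 1 ≤ n) (h : ℕ → ℕ → ℝ)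
    (hHess : ∀ j k, k < n → j > k + 1 → h j k = 0)
    (hsub : ∀ k < n, h (k + 1) k ≠ 0)
    (p : ℕ → Polynomial ℝ) (hp0 : p 0 = 1)
    (hrec : ∀ k < n,
      h (k + 1) k • p (k + 1) =
        Polynomial.X * p k - ∑ j ∈ Finset.range (k + 1), h j k • p j)
    (M : ℕ) (s : Fin M → ℝ)
    (H : Matrix (Fin (n + 1)) (Fin n) ℝ)
    (hH : ∀ j k, H j k = h (j : ℕ) (k : ℕ))
    (W : Matrix (Fin M ⊕ Fin M) (Fin (n + 1)) ℝ)
    (hWtop : ∀ j k, W (Sum.inl j) k = (p (k : ℕ)).eval (s j))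
    (hWbot : ∀ j k, W (Sum.inr j) k =
      (Polynomial.derivative (p (k : ℕ))).eval (s j)) :
    ((∀ j, W (Sum.inl j) 0 = 1) ∧ (∀ j, W (Sum.inr j) 0 = 0)) ∧
    Matrix.fromBlocks (Matrix.diagonal s) 0 1 (Matrix.diagonal s) *
        W.submatrix id Fin.castSucc = W * H ∧
    ∀ W' : Matrix (Fin M ⊕ Fin M) (Fin (n + 1)) ℝ,
      (∀ j, W' (Sum.inl j) 0 = 1) → (∀ j, W' (Sum.inr j) 0 = 0) →
      Matrix.fromBlocks (Matrix.diagonal s) 0 1 (Matrix.diagonal s) *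
          W'.submatrix id Fin.castSucc = W' * H →
      W' = W := by
  -- entry formulas for the block matrix product
  have blkl : ∀ (V : Matrix (Fin M ⊕ Fin M) (Fin (n+1)) ℝ) (j : Fin M) (k : Fin n),
      (Matrix.fromBlocks (Matrix.diagonal s) 0 1 (Matrix.diagonal s) *
        V.submatrix id Fin.castSucc) (Sum.inl j) k
        = s j * V (Sum.inl j) (Fin.castSucc k) := by
    intro V j k
    simp [Matrix.mul_apply, Fintype.sum_sum_type, Matrix.diagonal_apply, Finset.sum_ite_eq,
      Matrix.fromBlocks]
  have blkr : ∀ (V : Matrix (Fin M ⊕ Fin M) (Fin (n+1)) ℝ) (j : Fin M) (k : Fin n),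
      (Matrix.fromBlocks (Matrix.diagonal s) 0 1 (Matrix.diagonal s) *
        V.submatrix id Fin.castSucc) (Sum.inr j) k
        = V (Sum.inl j) (Fin.castSucc k) + s j * V (Sum.inr j) (Fin.castSucc k) := by
    intro V j k
    simp [Matrix.mul_apply, Fintype.sum_sum_type, Matrix.diagonal_apply, Finset.sum_ite_eq,
      Matrix.fromBlocks, Matrix.one_apply]
  -- key polynomial identity
  have key : ∀ k, k < n →
      (Polynomial.X : Polynomial ℝ) * p k = ∑ i ∈ Finset.range (n+1), h i k • p i := by
    intro k hk
    have e1 : ∑ i ∈ Finset.range (n+1), h i k • p i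
        = ∑ i ∈ Finset.range (k+2), h i k • p i := by
      refine (Finset.sum_subset (Finset.range_subset_range.2 (by omega)) fun i hi hni => ?_).symm
      simp only [Finset.mem_range] at hi hni
      rw [hHess i k hk (by omega), zero_smul]
    rw [e1, Finset.sum_range_succ, hrec k hk]
    ring
  -- evaluated versions
  have keval : ∀ k, k < n → ∀ j : Fin M,
      s j * (p k).eval (s j) = ∑ i ∈ Finset.range (n+1), h i k * (p i).eval (s j) := by
    intro k hk j
    have := congrArg (Polynomial.eval (s j)) (key k hk)
    simpa [Polynomial.eval_finset_sum] using this
  have kder : ∀ k, k < n → ∀ j : Fin M,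
      (p k).eval (s j) + s j * (Polynomial.derivative (p k)).eval (s j)
        = ∑ i ∈ Finset.range (n+1), h i k * (Polynomial.derivative (p i)).eval (s j) := by
    intro k hk j
    have := congrArg (fun q => (Polynomial.derivative q).eval (s j)) (key k hk)
    simp only [Polynomial.derivative_mul, Polynomial.derivative_X, one_mul,
      map_sum, Polynomial.derivative_smul, Polynomial.eval_add, Polynomial.eval_mul,
      Polynomial.eval_X, Polynomial.eval_finset_sum, Polynomial.eval_smul,
      smul_eq_mul] at this
    linarith [this]
  -- the main relation for W
  have rel : Matrix.fromBlocks (Matrix.diagonal s) 0 1 (Matrix.diagonal s) *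
      W.submatrix id Fin.castSucc = W * H := by
    ext r k
    have hsum : ∀ f : ℕ → ℝ, ∑ i : Fin (n+1), f i = ∑ i ∈ Finset.range (n+1), f i :=
      fun f => Fin.sum_univ_eq_sum_range f (n+1)
    cases r with
    | inl j =>
      rw [blkl, Matrix.mul_apply]
      simp only [hWtop, hH]
      rw [hsum (fun i => (p i).eval (s j) * h i k)]
      have := keval k k.2 j
      simp only [Fin.coe_castSucc]
      rw [this]
      exact Finset.sum_congr rfl fun i _ => mul_comm _ _
    | inr j =>
      rw [blkr, Matrix.mul_apply]
      simp only [hWtop, hWbot, hH]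
      rw [hsum (fun i => (Polynomial.derivative (p i)).eval (s j) * h i k)]
      have := kder k k.2 j
      simp only [Fin.coe_castSucc]
      rw [this]
      exact Finset.sum_congr rfl fun i _ => mul_comm _ _
  refine ⟨⟨fun j => by simp [hWtop, hp0], fun j => by simp [hWbot, hp0]⟩, rel, ?_⟩
  -- uniqueness
  intro W' htop' hbot' rel'
  have col : ∀ m : ℕ, ∀ hm : m < n + 1, ∀ r, W' r ⟨m, hm⟩ = W r ⟨m, hm⟩ := by
    intro m
    induction m using Nat.strong_induction_on with
    | _ m IH =>
      intro hm r
      match m, hm with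
      | 0, hm =>
        have h0 : (⟨0, hm⟩ : Fin (n+1)) = 0 := rfl
        cases r with
        | inl j => rw [h0, htop' j, hWtop]; simp [hp0]
        | inr j => rw [h0, hbot' j, hWbot]; simp [hp0]
      | m + 1, hm =>
        have hmn : m < n := by omega
        set k : Fin n := ⟨m, hmn⟩ with hk
        -- from both relations at column k, row r
        have e1 := congrFun (congrFun rel' r) k
        have e2 := congrFun (congrFun rel r) k
        -- LHS entries agree by IH at column m
        have hcast : Fin.castSucc k = ⟨m, by omega⟩ := rfl
        have lhs_eq : (Matrix.fromBlocks (Matrix.diagonal s) 0 1 (Matrix.diagonal s) *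
            W'.submatrix id Fin.castSucc) r k =
            (Matrix.fromBlocks (Matrix.diagonal s) 0 1 (Matrix.diagonal s) *
            W.submatrix id Fin.castSucc) r k := by
          cases r with
          | inl j => rw [blkl, blkl, hcast, IH m (by omega) (by omega)]
          | inr j =>
            rw [blkr, blkr, hcast, IH m (by omega) (by omega),
              IH m (by omega) (by omega)]
        have e3 : (W' * H) r k = (W * H) r k := by rw [← e1, ← e2, lhs_eq]
        rw [Matrix.mul_apply, Matrix.mul_apply] at e3
        have e4 : ∑ i : Fin (n+1), (W' r i - W r i) * H i k = 0 := by
          simp only [sub_mul, Finset.sum_sub_distrib, e3, sub_self]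
        have e5 : ∑ i : Fin (n+1), (W' r i - W r i) * H i k
            = (W' r ⟨m+1, hm⟩ - W r ⟨m+1, hm⟩) * H ⟨m+1, hm⟩ k := by
          refine Finset.sum_eq_single _ (fun i _ hne => ?_)
            (fun habs => absurd (Finset.mem_univ _) habs)
          have hvne : (i : ℕ) ≠ m + 1 := fun hv => hne (Fin.ext hv)
          rcases lt_or_gt_of_ne hvne with hlt | hgt
          · have := IH (i : ℕ) (by omega) i.2 r
            simp only [Fin.eta] at this
            rw [this, sub_self, zero_mul]
          · rw [hH, hHess i k hmn (by simpa using hgt), mul_zero]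
        rw [e5] at e4
        have hHk : H ⟨m+1, hm⟩ k = h (m+1) m := by rw [hH]
        rw [hHk] at e4
        have := mul_eq_zero.1 e4
        rcases this with h0 | h0
        · linarith [sub_eq_zero.1 h0]
        · exact absurd h0 (hsub m hmn)
  ext r i
  exact col i i.2 r
end
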